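/- arXiv:math/0501269 — 4 statements merged into one kernel-verified Lean document; each statement's English description precedes it below -/
import Mathlib

section
/- Let U and V be formal power series in x and y satisfying U = x y (1+V)^2 and V = y (1+U)^2, and for a fixed parameter x let W(x,s) = s(1+U(x,s)) where U(x,s) denotes U evaluated at second variable s. Then the identity (1+U)^2 U / (1+U+V)^3 = (W - s) / (W (1+W)^3) holds. -/
/-- If `U = x·s·(1+V)²`, `V = s·(1+U)²` and `W = s·(1+U)`, then
`(1+U)²·U/(1+U+V)³ = (W - s)/(W·(1+W)³)` (an algebraic identity among these
quantities, valid whenever the denominators do not vanish). -/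
theorem network_integrand_identity {K : Type*} [Field K]
    (x s U V W : K)
    (hU : U = x * s * (1 + V) ^ 2)
    (hV : V = s * (1 + U) ^ 2)
    (hW : W = s * (1 + U))
    (hUV : 1 + U + V ≠ 0) (hWne : W ≠ 0) (hW1 : 1 + W ≠ 0) :
    (1 + U) ^ 2 * U / (1 + U + V) ^ 3 = (W - s) / (W * (1 + W) ^ 3) := by
  have hs : s ≠ 0 := fun h => hWne (by simp [hW, h])
  have hU1 : (1 : K) + U ≠ 0 := fun h => hWne (by rw [hW, h, mul_zero])
  have hkey : 1 + U + V = (1 + U) * (1 + W) := by rw [hV, hW]; ring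
  have hWs : W - s = s * U := by rw [hW]; ring
  have hW1' : (1 : K) + s * (1 + U) ≠ 0 := by rw [← hW]; exact hW1
  rw [hkey, hWs, hW]
  rw [div_eq_div_iff (by simp [pow_ne_zero, mul_ne_zero, hU1, hW1'])
    (by simp [pow_ne_zero, mul_ne_zero, hs, hU1, hW1'])]
  ring
end

section
/- With U, V, W as above (U = x s(1+V)^2, V = s(1+U)^2, W = s(1+U)), the series W satisfies the algebraic equation x s^2 + (1 + 2 x W^2) s + W (x W^3 - 1) = 0. -/
/-- With `U = x·s·(1+V)²`, `V = s·(1+U)²` and `W = s·(1+U)`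
(and `s ≠ 0`), the quantity `W` satisfies the algebraic equation
`x·s² + (1 + 2·x·W²)·s + W·(x·W³ - 1) = 0`. -/
theorem W_algebraic_equation {K : Type*} [Field K]
    (x s U V W : K) (hs : s ≠ 0)
    (hU : U = x * s * (1 + V) ^ 2)
    (hV : V = s * (1 + U) ^ 2)
    (hW : W = s * (1 + U)) :
    x * s ^ 2 + (1 + 2 * x * W ^ 2) * s + W * (x * W ^ 3 - 1) = 0 := by
  subst hW hV
  linear_combination (-s) * hU
end

section
/- For real t with 0 < t < 1, the function Q(x,t) = sqrt(1+4xt+4xt^2) satisfies: the derivative with respect to t of the function F(t) = (1-2(t+4x+4xt))/(4x(1+t)^2) - ((1+2x(1+t))/(2x(1+t)^2))·Q^3 + (2+4xt + (1+2(t-x-tx))/(4x(1+t)^2))·Q + ((2x^2-4x+1)/(4x))·log((Q+1-2x-2xt)/(Q-1+2x+2xt)) - (1/(2x))·log(Q+1+2xt) + ((1-4x)/(2x))·log(1+t) equals (Q - 1 - 2xt - 2xt^2)(2Qt - 2t - 1)/(2xt(1+t)^3 Q), for any fixed x > 0 for which all denominators and log arguments are positive. -/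
open Real

set_option linter.unreachableTactic false
set_option linter.unnecessarySeqFocus false
set_option linter.unusedTactic false
set_option linter.flexible false
set_option maxHeartbeats 4000000
set_option maxRecDepth 100000


/-- For fixed `x > 0` and `t ∈ (0,1)` with all denominators and
logarithm arguments positive, the function `F` below (with
`Q = Q(x,t) = √(1+4xt+4xt²)`) is an antiderivative of
`(Q - 1 - 2xt - 2xt²)(2Qt - 2t - 1)/(2xt(1+t)³Q)`. -/
theorem antiderivative_of_map_integrand
    (x t : ℝ) (hx : 0 < x) (ht0 : 0 < t) (ht1 : t < 1)
    (hlog1 : 0 < Real.sqrt (1 + 4 * x * t + 4 * x * t ^ 2) + 1 - 2 * x - 2 * x * t)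
    (hlog2 : 0 < Real.sqrt (1 + 4 * x * t + 4 * x * t ^ 2) - 1 + 2 * x + 2 * x * t)
    (hlog3 : 0 < Real.sqrt (1 + 4 * x * t + 4 * x * t ^ 2) + 1 + 2 * x * t) :
    HasDerivAt
      (fun s : ℝ =>
        (1 - 2 * (s + 4 * x + 4 * x * s)) / (4 * x * (1 + s) ^ 2)
        - ((1 + 2 * x * (1 + s)) / (2 * x * (1 + s) ^ 2))
            * Real.sqrt (1 + 4 * x * s + 4 * x * s ^ 2) ^ 3
        + (2 + 4 * x * s + (1 + 2 * (s - x - s * x)) / (4 * x * (1 + s) ^ 2))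
            * Real.sqrt (1 + 4 * x * s + 4 * x * s ^ 2)
        + ((2 * x ^ 2 - 4 * x + 1) / (4 * x))
            * Real.log ((Real.sqrt (1 + 4 * x * s + 4 * x * s ^ 2) + 1 - 2 * x - 2 * x * s)
              / (Real.sqrt (1 + 4 * x * s + 4 * x * s ^ 2) - 1 + 2 * x + 2 * x * s))
        - (1 / (2 * x))
            * Real.log (Real.sqrt (1 + 4 * x * s + 4 * x * s ^ 2) + 1 + 2 * x * s)
        + ((1 - 4 * x) / (2 * x)) * Real.log (1 + s))
      ((Real.sqrt (1 + 4 * x * t + 4 * x * t ^ 2) - 1 - 2 * x * t - 2 * x * t ^ 2)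
        * (2 * Real.sqrt (1 + 4 * x * t + 4 * x * t ^ 2) * t - 2 * t - 1)
        / (2 * x * t * (1 + t) ^ 3 * Real.sqrt (1 + 4 * x * t + 4 * x * t ^ 2)))
      t := by
  have hx0 : x ≠ 0 := hx.ne'
  have h1t : (0:ℝ) < 1 + t := by linarith
  have hut : (0:ℝ) < 1 + 4 * x * t + 4 * x * t ^ 2 := by positivity
  set q := Real.sqrt (1 + 4 * x * t + 4 * x * t ^ 2) with hqdef
  have hq0 : 0 < q := Real.sqrt_pos.mpr hut
  have hq2 : q ^ 2 = 1 + 4 * x * t + 4 * x * t ^ 2 := Real.sq_sqrt hut.le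
  -- derivative of the inner polynomial
  have hid : HasDerivAt (fun s : ℝ => s) 1 t := hasDerivAt_id t
  have hsq : HasDerivAt (fun s : ℝ => s ^ 2) (2 * t) t := by
    simpa using hasDerivAt_pow 2 t
  have hu : HasDerivAt (fun s : ℝ => 1 + 4 * x * s + 4 * x * s ^ 2) (4 * x + 8 * x * t) t := by
    have h := ((hid.const_mul (4 * x)).const_add 1).add (hsq.const_mul (4 * x))
    exact h.congr_deriv (by ring)
  -- derivative of q(s)
  have hQd : HasDerivAt (fun s : ℝ => Real.sqrt (1 + 4 * x * s + 4 * x * s ^ 2))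
      (1 / (2 * q) * (4 * x + 8 * x * t)) t := by
    have h := (Real.hasDerivAt_sqrt hut.ne').comp t hu
    exact h.congr_deriv (by rw [hqdef])
  set e := 1 / (2 * q) * (4 * x + 8 * x * t) with hedef
  -- denominator helpers
  have hD : HasDerivAt (fun s : ℝ => 4 * x * (1 + s) ^ 2) (4 * x * (2 * (1 + t))) t := by
    have h1 : HasDerivAt (fun s : ℝ => (1 + s) ^ 2) (2 * (1 + t)) t := by
      have := (hid.const_add 1).pow 2
      exact this.congr_deriv (by simp)
    simpa using h1.const_mul (4 * x)
  have hDne : 4 * x * (1 + t) ^ 2 ≠ 0 := by positivity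
  -- T1
  have hN1 : HasDerivAt (fun s : ℝ => 1 - 2 * (s + 4 * x + 4 * x * s)) (-(2 * (1 + (4 * x)))) t := by
    have h := (((hid.add_const (4 * x)).add (hid.const_mul (4 * x))).const_mul 2).const_sub 1
    exact h.congr_deriv (by ring)
  have hT1 := hN1.div hD hDne
  -- T2
  have hN2 : HasDerivAt (fun s : ℝ => 1 + 2 * x * (1 + s)) (2 * x) t := by
    have h := ((hid.const_add 1).const_mul (2 * x)).const_add 1
    simpa using h
  have hD2 : HasDerivAt (fun s : ℝ => 2 * x * (1 + s) ^ 2) (2 * x * (2 * (1 + t))) t := by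
    have h1 : HasDerivAt (fun s : ℝ => (1 + s) ^ 2) (2 * (1 + t)) t := by
      exact ((hid.const_add 1).pow 2).congr_deriv (by simp)
    simpa using h1.const_mul (2 * x)
  have hD2ne : 2 * x * (1 + t) ^ 2 ≠ 0 := by positivity
  have hQ3 : HasDerivAt (fun s : ℝ => Real.sqrt (1 + 4 * x * s + 4 * x * s ^ 2) ^ 3)
      (3 * q ^ 2 * e) t := by
    exact (hQd.pow 3).congr_deriv (by rw [hqdef]; norm_num)
  have hT2 := (hN2.div hD2 hD2ne).mul hQ3
  -- T3
  have hN3 : HasDerivAt (fun s : ℝ => 1 + 2 * (s - x - s * x)) (2 * (1 - x)) t := by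
    have h := (((hid.sub_const x).sub (hid.mul_const x)).const_mul 2).const_add 1
    exact h.congr_deriv (by ring)
  have hA3 : HasDerivAt (fun s : ℝ => 2 + 4 * x * s + (1 + 2 * (s - x - s * x)) / (4 * x * (1 + s) ^ 2))
      (4 * x + ((2 * (1 - x)) * (4 * x * (1 + t) ^ 2) - (1 + 2 * (t - x - t * x)) * (4 * x * (2 * (1 + t)))) / (4 * x * (1 + t) ^ 2) ^ 2) t := by
    have h := (((hid.const_mul (4 * x)).const_add 2)).add (hN3.div hD hDne)
    exact h.congr_deriv (by ring)
  have hT3 := hA3.mul hQd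
  -- T4
  have hlin : HasDerivAt (fun s : ℝ => 2 * x * s) (2 * x) t := by
    simpa using hid.const_mul (2 * x)
  have hA : HasDerivAt (fun s : ℝ => Real.sqrt (1 + 4 * x * s + 4 * x * s ^ 2) + 1 - 2 * x - 2 * x * s)
      (e - 2 * x) t := by
    exact ((hQd.add_const 1).sub_const (2 * x)).sub hlin
  have hB : HasDerivAt (fun s : ℝ => Real.sqrt (1 + 4 * x * s + 4 * x * s ^ 2) - 1 + 2 * x + 2 * x * s)
      (e + 2 * x) t := by
    exact ((hQd.sub_const 1).add_const (2 * x)).add hlin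
  have hBt : (fun s : ℝ => Real.sqrt (1 + 4 * x * s + 4 * x * s ^ 2) - 1 + 2 * x + 2 * x * s) t ≠ 0 := by
    simpa [hqdef] using hlog2.ne'
  have hABne : (q + 1 - 2 * x - 2 * x * t) / (q - 1 + 2 * x + 2 * x * t) ≠ 0 :=
    (div_pos hlog1 hlog2).ne'
  have hAB := hA.div hB hlog2.ne'
  have hT4 := (hAB.log hABne).const_mul ((2 * x ^ 2 - 4 * x + 1) / (4 * x))
  -- T5
  have hC : HasDerivAt (fun s : ℝ => Real.sqrt (1 + 4 * x * s + 4 * x * s ^ 2) + 1 + 2 * x * s)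
      (e + 2 * x) t := (hQd.add_const 1).add hlin
  have hT5 := (hC.log hlog3.ne').const_mul (1 / (2 * x))
  -- T6
  have hT6 := (((hid.const_add 1)).log h1t.ne').const_mul ((1 - 4 * x) / (2 * x))
  have total := ((((hT1.sub hT2).add hT3).add hT4).sub hT5).add hT6
  refine total.congr_deriv ?_
  simp only [Pi.div_apply]
  rw [← hqdef, hedef]
  field_simp
  linear_combination ((-8) + (8)*q^2 + (-16)*t^1 + (8)*t^1*q^1 + (8)*t^1*q^2 + (-16)*t^1*q^3 + (16)*t^1*q^4 + (16)*t^1*q^5 + (24)*t^2*q^1 + (16)*t^2*q^2 + (-8)*t^2*q^3 + (8)*t^3*q^1 + (8)*t^3*q^2 + (32)*x^1 + (104)*x^1*t^1 + (-24)*x^1*t^1*q^1 + (24)*x^1*t^1*q^2 + (24)*x^1*t^1*q^3 + (16)*x^1*t^1*q^4 + (16)*x^1*t^1*q^5 + (120)*x^1*t^2 + (-88)*x^1*t^2*q^1 + (-40)*x^1*t^2*q^2 + (-8)*x^1*t^2*q^3 + (48)*x^1*t^2*q^4 + (16)*x^1*t^2*q^5 + (96)*x^1*t^3 + (-80)*x^1*t^3*q^1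 + (-48)*x^1*t^3*q^2 + (-32)*x^1*t^3*q^3 + (32)*x^1*t^4 + (-16)*x^1*t^4*q^1 + (-32)*x^2 + (-144)*x^2*t^1 + (16)*x^2*t^1*q^1 + (-32)*x^2*t^1*q^2 + (-32)*x^2*t^1*q^3 + (-304)*x^2*t^2 + (64)*x^2*t^2*q^1 + (-80)*x^2*t^2*q^2 + (-128)*x^2*t^2*q^3 + (32)*x^2*t^2*q^4 + (-416)*x^2*t^3 + (80)*x^2*t^3*q^1 + (-176)*x^2*t^3*q^2 + (-160)*x^2*t^3*q^3 + (32)*x^2*t^3*q^4 + (-288)*x^2*t^4 + (32)*x^2*t^4*q^1 + (-128)*x^2*t^4*q^2 + (-64)*x^2*t^4*q^3 + (-64)*x^2*t^5 + (-64)*x^3*t^1 + (-64)*x^3*t^1*q^1 + (-64)*x^3*t^1*q^2 + (-64)*x^3*t^1*q^3 + (-288)*x^3*t^2 + (-320)*x^3*t^2*q^1 + (-256)*x^3*t^2*q^2 + (-192)*x^3*t^2*q^3 + (-448)*x^3*t^3 + (-576)*x^3*t^3*q^1 + (-448)*x^3*t^3*q^2 + (-192)*x^3*t^3*q^3 + (-288)*x^3*t^4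 + (-448)*x^3*t^4*q^1 + (-384)*x^3*t^4*q^2 + (-64)*x^3*t^4*q^3 + (-64)*x^3*t^5 + (-128)*x^3*t^5*q^1 + (-128)*x^3*t^5*q^2 + (128)*x^4*t^1 + (128)*x^4*t^1*q^1 + (640)*x^4*t^2 + (768)*x^4*t^2*q^1 + (-128)*x^4*t^2*q^2 + (1152)*x^4*t^3 + (1792)*x^4*t^3*q^1 + (-384)*x^4*t^3*q^2 + (896)*x^4*t^4 + (2048)*x^4*t^4*q^1 + (-384)*x^4*t^4*q^2 + (256)*x^4*t^5 + (1152)*x^4*t^5*q^1 + (-128)*x^4*t^5*q^2 + (256)*x^4*t^6*q^1 + (256)*x^5*t^2 + (1536)*x^5*t^3 + (3584)*x^5*t^4 + (4096)*x^5*t^5 + (2304)*x^5*t^6 + (512)*x^5*t^7) * hq2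
end

section
/- Let C(x) be a power series with nonnegative coefficients, radius of convergence ρ, finite value C(ρ) = C_0, and suppose [x^n]C(x)^k ~ k·C_0^{k-1}·[x^n]C(x) as n → ∞ for each fixed k ≥ 1, and that G(x) = exp(C(x)). Then for each fixed k ≥ 1, the ratio ([x^n](C(x)^k/k!)) / ([x^n]G(x)) converges, as n → ∞, to (C_0^{k-1}/(k-1)!)·e^{−C_0}. -/
open Filter PowerSeries Finset

private lemma SP.coeff_pow_succ (C : PowerSeries ℝ) (k n : ℕ) :
    coeff n (C ^ (k + 1)) =
      ∑ j ∈ range (n + 1), coeff j (C ^ k) * coeff (n - j) C := by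
  rw [pow_succ, coeff_mul]
  exact Finset.Nat.sum_antidiagonal_eq_sum_range_succ
    (fun i j => coeff i (C ^ k) * coeff j C) n

private lemma SP.coeff_pow_nonneg {C : PowerSeries ℝ}
    (hnonneg : ∀ n : ℕ, 0 ≤ coeff n C) (k n : ℕ) : 0 ≤ coeff n (C ^ k) := by
  induction k generalizing n with
  | zero =>
    rw [pow_zero, coeff_one]
    split <;> norm_num
  | succ k ih =>
    rw [SP.coeff_pow_succ]
    exact Finset.sum_nonneg fun j _ => mul_nonneg (ih j) (hnonneg _)

private lemma SP.conv_rho (C : PowerSeries ℝ) (ρ : ℝ) (k n : ℕ) :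
    coeff n (C ^ (k + 1)) * ρ ^ n =
      ∑ j ∈ range (n + 1),
        (coeff j (C ^ k) * ρ ^ j) * (coeff (n - j) C * ρ ^ (n - j)) := by
  rw [SP.coeff_pow_succ, Finset.sum_mul]
  refine Finset.sum_congr rfl fun j hj => ?_
  have hjn : j ≤ n := Nat.lt_succ_iff.mp (Finset.mem_range.mp hj)
  rw [show ρ ^ n = ρ ^ j * ρ ^ (n - j) by rw [← pow_add, Nat.add_sub_cancel' hjn]]
  ring

private lemma SP.hasSum_pow {C : PowerSeries ℝ} {ρ C₀ : ℝ} (hρ : 0 < ρ)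
    (hnonneg : ∀ n : ℕ, 0 ≤ coeff n C)
    (hval : HasSum (fun n : ℕ => coeff n C * ρ ^ n) C₀) (k : ℕ) :
    HasSum (fun n : ℕ => coeff n (C ^ k) * ρ ^ n) (C₀ ^ k) := by
  induction k with
  | zero =>
    simp only [pow_zero, coeff_one]
    convert hasSum_single (f := fun n : ℕ => (if n = 0 then (1:ℝ) else 0) * ρ ^ n) 0
      (fun b hb => by simp [hb]) using 1
    simp
  | succ k ih =>
    have hn1 : ∀ n : ℕ, ‖coeff n (C ^ k) * ρ ^ n‖ = coeff n (C ^ k) * ρ ^ n := fun n =>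
      Real.norm_of_nonneg (mul_nonneg (SP.coeff_pow_nonneg hnonneg k n) (pow_nonneg hρ.le n))
    have hn2 : ∀ n : ℕ, ‖coeff n C * ρ ^ n‖ = coeff n C * ρ ^ n := fun n =>
      Real.norm_of_nonneg (mul_nonneg (hnonneg n) (pow_nonneg hρ.le n))
    have hs1 : Summable fun n : ℕ => ‖coeff n (C ^ k) * ρ ^ n‖ := by
      simpa only [hn1] using ih.summable
    have hs2 : Summable fun n : ℕ => ‖coeff n C * ρ ^ n‖ := by
      simpa only [hn2] using hval.summable
    have H := hasSum_sum_range_mul_of_summable_norm hs1 hs2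
    rw [ih.tsum_eq, hval.tsum_eq] at H
    have heq : (fun n : ℕ => ∑ j ∈ range (n + 1),
        (coeff j (C ^ k) * ρ ^ j) * (coeff (n - j) C * ρ ^ (n - j)))
        = fun n : ℕ => coeff n (C ^ (k + 1)) * ρ ^ n :=
      funext fun n => (SP.conv_rho C ρ k n).symm
    rw [heq] at H
    rw [pow_succ]
    exact H

/-- Let `C` be a power series with nonnegative coefficients,
radius of convergence `ρ > 0` and finite value `C(ρ) = C₀`, such that
`[xⁿ]Cᵏ ~ k·C₀^{k-1}·[xⁿ]C` for each fixed `k ≥ 1`, and let `G = exp C`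
(expressed coefficientwise).  Then for each fixed `k ≥ 1`,
`([xⁿ](Cᵏ/k!)) / ([xⁿ]G) → (C₀^{k-1}/(k-1)!)·e^{−C₀}` as `n → ∞`. -/
theorem shifted_poisson_components
    (C G : PowerSeries ℝ) (ρ C₀ : ℝ) (hρ : 0 < ρ)
    (hnonneg : ∀ n : ℕ, 0 ≤ PowerSeries.coeff n C)
    (hval : HasSum (fun n : ℕ => PowerSeries.coeff n C * ρ ^ n) C₀)
    (hasymp : ∀ k : ℕ, 1 ≤ k →
      Tendsto (fun n : ℕ =>
          PowerSeries.coeff n (C ^ k) / PowerSeries.coeff n C)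
        atTop (nhds (k * C₀ ^ (k - 1))))
    (hG : ∀ n : ℕ, PowerSeries.coeff n G =
      ∑ k ∈ range (n + 1),
        ((k.factorial : ℝ))⁻¹ * PowerSeries.coeff n (C ^ k)) :
    ∀ k : ℕ, 1 ≤ k →
      Tendsto (fun n : ℕ =>
          (PowerSeries.coeff n (C ^ k) / k.factorial)
            / PowerSeries.coeff n G)
        atTop
        (nhds (C₀ ^ (k - 1) / (k - 1).factorial * Real.exp (-C₀))) := by
  have hC₀ : 0 ≤ C₀ :=
    hasSum_le (fun n => mul_nonneg (hnonneg n) (pow_nonneg hρ.le n)) hasSum_zero hval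
  -- eventual positivity of coefficients
  have h1 := hasymp 1 le_rfl
  simp only [pow_one, Nat.cast_one, Nat.sub_self, pow_zero, one_mul] at h1
  have hevpos : ∀ᶠ n in atTop, 0 < coeff n C := by
    filter_upwards [h1.eventually (eventually_gt_nhds (by norm_num : (0:ℝ) < 1))] with n hn
    by_contra h
    push_neg at h
    have hz : coeff n C = 0 := le_antisymm h (hnonneg n)
    simp [hz] at hn
  obtain ⟨m₀, hm₀⟩ := eventually_atTop.mp hevpos
  set n₀ : ℕ := max m₀ 1 with hn₀def
  have hn₀pos : ∀ n, n₀ ≤ n → 0 < coeff n C := fun n hn =>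
    hm₀ n (le_trans (le_max_left _ _) hn)
  have hn₀1 : 1 ≤ n₀ := le_max_right _ _
  -- ratio bound for each fixed power
  have ratio_bound : ∀ k : ℕ, 1 ≤ k → ∃ Mk : ℝ, 0 ≤ Mk ∧ ∀ n, n₀ ≤ n →
      coeff n (C ^ k) ≤ Mk * coeff n C := by
    intro k hk
    obtain ⟨N, hN⟩ := eventually_atTop.mp <| (hasymp k hk).eventually
      (eventually_lt_nhds (lt_add_one _))
    set R : ℕ → ℝ := fun m => coeff m (C ^ k) / coeff m C with hR
    refine ⟨max ((k : ℝ) * C₀ ^ (k - 1) + 1) (∑ m ∈ range N, |R m|), ?_, ?_⟩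
    · exact le_trans (Finset.sum_nonneg fun m _ => abs_nonneg _) (le_max_right _ _)
    · intro n hn
      have hc := hn₀pos n hn
      have hrw : coeff n (C ^ k) = R n * coeff n C := (div_mul_cancel₀ _ hc.ne').symm
      have hRle : R n ≤ max ((k : ℝ) * C₀ ^ (k - 1) + 1) (∑ m ∈ range N, |R m|) := by
        rcases le_or_gt N n with h | h
        · exact le_trans (hN n h).le (le_max_left _ _)
        · refine le_trans (le_abs_self _) (le_trans ?_ (le_max_right _ _))
          exact Finset.single_le_sum (fun m _ => abs_nonneg (R m)) (Finset.mem_range.mpr h)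
      rw [hrw]
      exact mul_le_mul_of_nonneg_right hRle hc.le
  -- the shift bound
  have Qle : ∀ k j : ℕ, coeff j (C ^ k) * ρ ^ j ≤ C₀ ^ k := fun k j =>
    le_hasSum (SP.hasSum_pow hρ hnonneg hval k) j fun i _ =>
      mul_nonneg (SP.coeff_pow_nonneg hnonneg k i) (pow_nonneg hρ.le i)
  have shift : ∀ j : ℕ, ∃ B : ℝ, 0 ≤ B ∧ ∀ k n : ℕ, n₀ ≤ n → j ≤ n →
      (coeff j (C ^ k) * ρ ^ j) * (coeff (n - j) C * ρ ^ (n - j))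
        ≤ B * C₀ ^ k * (coeff n C * ρ ^ n) := by
    intro j
    by_cases hz : ∀ k, coeff j (C ^ k) = 0
    · exact ⟨0, le_rfl, fun k n _ _ => by simp [hz k]⟩
    · push_neg at hz
      obtain ⟨k₀, hk₀⟩ := hz
      have hQpos : 0 < coeff j (C ^ k₀) * ρ ^ j :=
        mul_pos ((SP.coeff_pow_nonneg hnonneg k₀ j).lt_of_ne (Ne.symm hk₀)) (pow_pos hρ j)
      obtain ⟨M', hM'0, hM'⟩ := ratio_bound (k₀ + 1) (Nat.le_add_left 1 k₀)
      refine ⟨M' / (coeff j (C ^ k₀) * ρ ^ j), by positivity, fun k n hn hjn => ?_⟩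
      have key : (coeff j (C ^ k₀) * ρ ^ j) * (coeff (n - j) C * ρ ^ (n - j))
          ≤ M' * (coeff n C * ρ ^ n) := by
        have h1 : (coeff j (C ^ k₀) * ρ ^ j) * (coeff (n - j) C * ρ ^ (n - j))
            ≤ coeff n (C ^ (k₀ + 1)) * ρ ^ n := by
          rw [SP.conv_rho C ρ k₀ n]
          exact Finset.single_le_sum (f := fun i => (coeff i (C ^ k₀) * ρ ^ i) *
              (coeff (n - i) C * ρ ^ (n - i)))
            (fun i _ => mul_nonneg
              (mul_nonneg (SP.coeff_pow_nonneg hnonneg k₀ i) (pow_nonneg hρ.le i))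
              (mul_nonneg (hnonneg _) (pow_nonneg hρ.le _)))
            (Finset.mem_range.mpr (Nat.lt_succ_of_le hjn))
        refine h1.trans ?_
        have h2 := mul_le_mul_of_nonneg_right (hM' n hn) (pow_nonneg hρ.le n)
        calc coeff n (C ^ (k₀ + 1)) * ρ ^ n ≤ M' * coeff n C * ρ ^ n := h2
          _ = M' * (coeff n C * ρ ^ n) := by ring
      have hqnj : coeff (n - j) C * ρ ^ (n - j)
          ≤ (M' / (coeff j (C ^ k₀) * ρ ^ j)) * (coeff n C * ρ ^ n) := by
        rw [div_mul_eq_mul_div, le_div_iff₀ hQpos]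
        calc (coeff (n - j) C * ρ ^ (n - j)) * (coeff j (C ^ k₀) * ρ ^ j)
            = (coeff j (C ^ k₀) * ρ ^ j) * (coeff (n - j) C * ρ ^ (n - j)) := by ring
          _ ≤ M' * (coeff n C * ρ ^ n) := key
      calc (coeff j (C ^ k) * ρ ^ j) * (coeff (n - j) C * ρ ^ (n - j))
          ≤ C₀ ^ k * ((M' / (coeff j (C ^ k₀) * ρ ^ j)) * (coeff n C * ρ ^ n)) := by
            refine mul_le_mul (Qle k j) hqnj
              (mul_nonneg (hnonneg _) (pow_nonneg hρ.le _)) (by positivity)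
        _ = (M' / (coeff j (C ^ k₀) * ρ ^ j)) * C₀ ^ k * (coeff n C * ρ ^ n) := by ring
  -- uniform exponential bound
  choose b hb0 hb using shift
  obtain ⟨M₂, hM₂0, hM₂⟩ := ratio_bound 2 one_le_two
  set Bm : ℝ := ∑ j ∈ range n₀, b j with hBmdef
  have hBm0 : 0 ≤ Bm := Finset.sum_nonneg fun j _ => hb0 j
  set M : ℝ := max (max M₂ C₀) 1 with hMdef
  have hM1 : (1:ℝ) ≤ M := le_max_right _ _
  have hMM₂ : M₂ ≤ M := le_trans (le_max_left _ _) (le_max_left _ _)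
  have hMC₀ : C₀ ≤ M := le_trans (le_max_right M₂ C₀) (le_max_left _ _)
  have hM0 : 0 ≤ M := le_trans zero_le_one hM1
  have main : ∀ k : ℕ, 1 ≤ k → ∀ n, n₀ ≤ n →
      coeff n (C ^ k) * ρ ^ n ≤ (1 + Bm * (k : ℝ)) * M ^ k * (coeff n C * ρ ^ n) := by
    intro k hk
    induction k, hk using Nat.le_induction with
    | base =>
      intro n hn
      rw [pow_one, pow_one]
      have hq : 0 ≤ coeff n C * ρ ^ n := mul_nonneg (hnonneg n) (pow_nonneg hρ.le n)
      have hone : (1:ℝ) ≤ (1 + Bm * ((1:ℕ) : ℝ)) * M := by push_cast; nlinarith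
      exact le_mul_of_one_le_left hq hone
    | succ k hk ih =>
      intro n hn
      have hq : 0 ≤ coeff n C * ρ ^ n := mul_nonneg (hnonneg n) (pow_nonneg hρ.le n)
      have hn₀n1 : n₀ ≤ n + 1 := le_trans hn (Nat.le_succ n)
      rw [SP.conv_rho C ρ k n]
      have hsplit : ∑ j ∈ range (n + 1),
            (coeff j (C ^ k) * ρ ^ j) * (coeff (n - j) C * ρ ^ (n - j))
          = (∑ j ∈ range n₀,
              (coeff j (C ^ k) * ρ ^ j) * (coeff (n - j) C * ρ ^ (n - j)))
            + ∑ j ∈ Ico n₀ (n + 1),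
              (coeff j (C ^ k) * ρ ^ j) * (coeff (n - j) C * ρ ^ (n - j)) := by
        rw [range_eq_Ico, ← Finset.sum_Ico_consecutive _ (Nat.zero_le n₀) hn₀n1, range_eq_Ico]
      rw [hsplit]
      have hsmall : ∑ j ∈ range n₀,
            (coeff j (C ^ k) * ρ ^ j) * (coeff (n - j) C * ρ ^ (n - j))
          ≤ Bm * C₀ ^ k * (coeff n C * ρ ^ n) := by
        calc ∑ j ∈ range n₀,
              (coeff j (C ^ k) * ρ ^ j) * (coeff (n - j) C * ρ ^ (n - j))
            ≤ ∑ j ∈ range n₀, b j * C₀ ^ k * (coeff n C * ρ ^ n) := by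
              refine Finset.sum_le_sum fun j hj => ?_
              have hjn : j ≤ n := ((Finset.mem_range.mp hj).trans_le hn).le
              exact hb j k n hn hjn
          _ = Bm * C₀ ^ k * (coeff n C * ρ ^ n) := by
              rw [hBmdef, Finset.sum_mul, Finset.sum_mul]
      have hbig : ∑ j ∈ Ico n₀ (n + 1),
            (coeff j (C ^ k) * ρ ^ j) * (coeff (n - j) C * ρ ^ (n - j))
          ≤ (1 + Bm * k) * M ^ k * (M₂ * (coeff n C * ρ ^ n)) := by
        have hcoef : 0 ≤ (1 + Bm * k) * M ^ k := by positivity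
        calc ∑ j ∈ Ico n₀ (n + 1),
              (coeff j (C ^ k) * ρ ^ j) * (coeff (n - j) C * ρ ^ (n - j))
            ≤ ∑ j ∈ Ico n₀ (n + 1), (1 + Bm * k) * M ^ k *
                ((coeff j C * ρ ^ j) * (coeff (n - j) C * ρ ^ (n - j))) := by
              refine Finset.sum_le_sum fun j hj => ?_
              have hj₀ : n₀ ≤ j := (Finset.mem_Ico.mp hj).1
              have h1 := ih j hj₀
              have h2 : 0 ≤ coeff (n - j) C * ρ ^ (n - j) :=
                mul_nonneg (hnonneg _) (pow_nonneg hρ.le _)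
              calc (coeff j (C ^ k) * ρ ^ j) * (coeff (n - j) C * ρ ^ (n - j))
                  ≤ ((1 + Bm * k) * M ^ k * (coeff j C * ρ ^ j)) *
                      (coeff (n - j) C * ρ ^ (n - j)) :=
                    mul_le_mul_of_nonneg_right h1 h2
                _ = (1 + Bm * k) * M ^ k *
                      ((coeff j C * ρ ^ j) * (coeff (n - j) C * ρ ^ (n - j))) := by ring
          _ = (1 + Bm * k) * M ^ k * ∑ j ∈ Ico n₀ (n + 1),
                ((coeff j C * ρ ^ j) * (coeff (n - j) C * ρ ^ (n - j))) := by
              rw [Finset.mul_sum]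
          _ ≤ (1 + Bm * k) * M ^ k * (M₂ * (coeff n C * ρ ^ n)) := by
              refine mul_le_mul_of_nonneg_left ?_ hcoef
              have hsub : ∑ j ∈ Ico n₀ (n + 1),
                    ((coeff j C * ρ ^ j) * (coeff (n - j) C * ρ ^ (n - j)))
                  ≤ ∑ j ∈ range (n + 1),
                    ((coeff j C * ρ ^ j) * (coeff (n - j) C * ρ ^ (n - j))) := by
                refine Finset.sum_le_sum_of_subset_of_nonneg ?_ fun j _ _ =>
                  mul_nonneg (mul_nonneg (hnonneg _) (pow_nonneg hρ.le _))
                    (mul_nonneg (hnonneg _) (pow_nonneg hρ.le _))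
                rw [range_eq_Ico]
                exact Finset.Ico_subset_Ico (Nat.zero_le _) le_rfl
              have hC2 : ∑ j ∈ range (n + 1),
                    ((coeff j C * ρ ^ j) * (coeff (n - j) C * ρ ^ (n - j)))
                  = coeff n (C ^ 2) * ρ ^ n := by
                have := SP.conv_rho C ρ 1 n
                simp only [pow_one] at this
                rw [← this]
              have hM₂n := mul_le_mul_of_nonneg_right (hM₂ n hn) (pow_nonneg hρ.le n)
              calc ∑ j ∈ Ico n₀ (n + 1),
                    ((coeff j C * ρ ^ j) * (coeff (n - j) C * ρ ^ (n - j)))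
                  ≤ coeff n (C ^ 2) * ρ ^ n := by rw [← hC2]; exact hsub
                _ ≤ M₂ * coeff n C * ρ ^ n := hM₂n
                _ = M₂ * (coeff n C * ρ ^ n) := by ring
      have harith : Bm * C₀ ^ k + (1 + Bm * k) * M ^ k * M₂
          ≤ (1 + Bm * ((k + 1 : ℕ) : ℝ)) * M ^ (k + 1) := by
        have hC₀k : C₀ ^ k ≤ M ^ k := pow_le_pow_left₀ hC₀ hMC₀ k
        have hMk : M ^ k ≤ M ^ (k + 1) := le_mul_of_one_le_left (pow_nonneg hM0 k) hM1 |>.trans_eq (pow_succ' M k).symm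
        have h1 : Bm * C₀ ^ k ≤ Bm * M ^ (k + 1) :=
          mul_le_mul_of_nonneg_left (hC₀k.trans hMk) hBm0
        have h2 : (1 + Bm * k) * M ^ k * M₂ ≤ (1 + Bm * k) * M ^ (k + 1) := by
          have : (1 + Bm * k) * M ^ k * M₂ ≤ (1 + Bm * k) * M ^ k * M := by
            refine mul_le_mul_of_nonneg_left hMM₂ (by positivity)
          calc (1 + Bm * k) * M ^ k * M₂ ≤ (1 + Bm * k) * M ^ k * M := this
            _ = (1 + Bm * k) * M ^ (k + 1) := by rw [pow_succ]; ring
        calc Bm * C₀ ^ k + (1 + Bm * k) * M ^ k * M₂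
            ≤ Bm * M ^ (k + 1) + (1 + Bm * k) * M ^ (k + 1) := add_le_add h1 h2
          _ = (1 + Bm * ((k + 1 : ℕ) : ℝ)) * M ^ (k + 1) := by push_cast; ring
      calc (∑ j ∈ range n₀,
              (coeff j (C ^ k) * ρ ^ j) * (coeff (n - j) C * ρ ^ (n - j)))
            + ∑ j ∈ Ico n₀ (n + 1),
              (coeff j (C ^ k) * ρ ^ j) * (coeff (n - j) C * ρ ^ (n - j))
          ≤ Bm * C₀ ^ k * (coeff n C * ρ ^ n)
            + (1 + Bm * k) * M ^ k * (M₂ * (coeff n C * ρ ^ n)) := add_le_add hsmall hbig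
        _ = (Bm * C₀ ^ k + (1 + Bm * k) * M ^ k * M₂) * (coeff n C * ρ ^ n) := by ring
        _ ≤ (1 + Bm * ((k + 1 : ℕ) : ℝ)) * M ^ (k + 1) * (coeff n C * ρ ^ n) :=
            mul_le_mul_of_nonneg_right harith hq
  have main' : ∀ k : ℕ, 1 ≤ k → ∀ n, n₀ ≤ n →
      coeff n (C ^ k) ≤ (1 + Bm * (k : ℝ)) * M ^ k * coeff n C := by
    intro k hk n hn
    have hρn : (0:ℝ) < ρ ^ n := pow_pos hρ n
    have h2 : coeff n (C ^ k) * ρ ^ n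
        ≤ ((1 + Bm * (k : ℝ)) * M ^ k * coeff n C) * ρ ^ n := by
      rw [mul_assoc]
      exact main k hk n hn
    exact le_of_mul_le_mul_right h2 hρn
  -- dominated convergence setup
  set F : ℕ → ℕ → ℝ := fun n k =>
    if k ≤ n then (k.factorial : ℝ)⁻¹ * coeff n (C ^ k) / coeff n C else 0 with hFdef
  set u : ℕ → ℝ := fun k => (1 + Bm) * ((2 * M) ^ k / k.factorial) with hudef
  have husum : Summable u := (Real.summable_pow_div_factorial (2 * M)).mul_left _
  set L : ℕ → ℝ := fun k =>
    if k = 0 then 0 else C₀ ^ (k - 1) / (k - 1).factorial with hLdef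
  have h_bound : ∀ᶠ n in atTop, ∀ k, ‖F n k‖ ≤ u k := by
    filter_upwards [eventually_ge_atTop n₀] with n hn k
    have hu0 : 0 ≤ u k := by
      have : (0:ℝ) ≤ 2 * M := by linarith
      rw [hudef]
      positivity
    by_cases hkn : k ≤ n
    · have hc := hn₀pos n hn
      rcases Nat.eq_zero_or_pos k with rfl | hk1
      · have hne : n ≠ 0 := by omega
        have : F n 0 = 0 := by
          simp only [hFdef, if_pos hkn, pow_zero, coeff_one, if_neg hne]
          simp
        rw [this, norm_zero]
        exact hu0
      · have hFeq : F n k = (k.factorial : ℝ)⁻¹ * coeff n (C ^ k) / coeff n C := by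
          simp only [hFdef, if_pos hkn]
        have hF0 : 0 ≤ F n k := by
          rw [hFeq]
          have := SP.coeff_pow_nonneg hnonneg k n
          positivity
        rw [Real.norm_of_nonneg hF0, hFeq]
        have hfk : (0:ℝ) < k.factorial := by exact_mod_cast k.factorial_pos
        have hdiv : (k.factorial : ℝ)⁻¹ * coeff n (C ^ k) / coeff n C
            ≤ (k.factorial : ℝ)⁻¹ * ((1 + Bm * (k : ℝ)) * M ^ k) := by
          rw [div_le_iff₀ hc]
          calc (k.factorial : ℝ)⁻¹ * coeff n (C ^ k)
              ≤ (k.factorial : ℝ)⁻¹ * ((1 + Bm * (k : ℝ)) * M ^ k * coeff n C) := by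
                refine mul_le_mul_of_nonneg_left (main' k hk1 n hn) (by positivity)
            _ = (k.factorial : ℝ)⁻¹ * ((1 + Bm * (k : ℝ)) * M ^ k) * coeff n C := by ring
        refine hdiv.trans ?_
        have h2k : (k : ℝ) ≤ 2 ^ k := by exact_mod_cast (Nat.lt_two_pow_self (n := k)).le
        have hstep : (1 + Bm * (k : ℝ)) * M ^ k ≤ (1 + Bm) * (2 * M) ^ k := by
          have hk1' : (1:ℝ) ≤ (k : ℝ) := by exact_mod_cast hk1
          have hMk0 : (0:ℝ) ≤ M ^ k := pow_nonneg hM0 k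
          have hA : (1:ℝ) + Bm * (k : ℝ) ≤ (1 + Bm) * (k : ℝ) := by nlinarith
          have hB : (1 + Bm) * (k : ℝ) ≤ (1 + Bm) * 2 ^ k := by nlinarith
          calc (1 + Bm * (k : ℝ)) * M ^ k ≤ ((1 + Bm) * 2 ^ k) * M ^ k := by nlinarith
            _ = (1 + Bm) * (2 * M) ^ k := by rw [mul_pow]; ring
        calc (k.factorial : ℝ)⁻¹ * ((1 + Bm * (k : ℝ)) * M ^ k)
            ≤ (k.factorial : ℝ)⁻¹ * ((1 + Bm) * (2 * M) ^ k) := by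
              refine mul_le_mul_of_nonneg_left hstep (by positivity)
          _ = (1 + Bm) * ((2 * M) ^ k / k.factorial) := by
              rw [div_eq_mul_inv]; ring
    · have : F n k = 0 := by simp only [hFdef, if_neg hkn]
      rw [this, norm_zero]
      exact hu0
  have hlim : ∀ k, Tendsto (fun n => F n k) atTop (nhds (L k)) := by
    intro k
    rcases Nat.eq_zero_or_pos k with rfl | hk1
    · have hev : ∀ᶠ n in atTop, (0:ℝ) = F n 0 := by
        filter_upwards [eventually_ge_atTop 1] with n hn
        have hne : n ≠ 0 := by omega
        simp only [hFdef, if_pos (Nat.zero_le n), pow_zero, coeff_one, if_neg hne]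
        simp
      have : L 0 = 0 := by simp [hLdef]
      rw [this]
      exact Tendsto.congr' hev tendsto_const_nhds
    · have hk0 : k ≠ 0 := by omega
      have hT := (hasymp k hk1).const_mul ((k.factorial : ℝ)⁻¹)
      have hfk : ((k.factorial : ℕ) : ℝ) ≠ 0 := by
        exact_mod_cast k.factorial_ne_zero
      have hkR : ((k:ℕ) : ℝ) ≠ 0 := by exact_mod_cast hk0
      have hval' : (k.factorial : ℝ)⁻¹ * ((k : ℝ) * C₀ ^ (k - 1))
          = C₀ ^ (k - 1) / (k - 1).factorial := by
        have hfacid : ((k.factorial : ℕ) : ℝ) = (k : ℝ) * ((k - 1).factorial : ℝ) := by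
          rw [← Nat.mul_factorial_pred (by omega : k ≠ 0)]
          push_cast
          ring
        have hf1 : (((k - 1).factorial : ℕ) : ℝ) ≠ 0 := by
          exact_mod_cast (k - 1).factorial_ne_zero
        rw [hfacid]
        field_simp
      have heq : ∀ᶠ n in atTop,
          (fun n => (k.factorial : ℝ)⁻¹ * (coeff n (C ^ k) / coeff n C)) n = F n k := by
        filter_upwards [eventually_ge_atTop k] with n hn
        simp only [hFdef, if_pos hn]
        ring
      have hLk : L k = C₀ ^ (k - 1) / (k - 1).factorial := by
        simp [hLdef, hk0]
      rw [hLk, ← hval']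
      exact Tendsto.congr' heq hT
  have hLsum : HasSum L (Real.exp C₀) := by
    have hs : Summable (fun k : ℕ => C₀ ^ k / (k.factorial : ℝ)) :=
      Real.summable_pow_div_factorial C₀
    have hshift : (fun k : ℕ => L (k + 1)) = fun k : ℕ => C₀ ^ k / (k.factorial : ℝ) := by
      funext k
      simp [hLdef]
    have h1 : Summable L := by
      rw [← summable_nat_add_iff 1]
      rw [hshift]
      exact hs
    have hexp : Real.exp C₀ = ∑' n : ℕ, C₀ ^ n / (n.factorial : ℝ) := by
      rw [Real.exp_eq_exp_ℝ, NormedSpace.exp_eq_tsum_div]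
    have htsum : ∑' k, L k = Real.exp C₀ := by
      rw [Summable.tsum_eq_zero_add h1, hexp]
      simp only [hshift]
      simp [hLdef]
    exact htsum ▸ h1.hasSum
  have hGlim : Tendsto (fun n => ∑' k, F n k) atTop (nhds (Real.exp C₀)) := by
    have h := tendsto_tsum_of_dominated_convergence husum hlim h_bound
    rwa [hLsum.tsum_eq] at h
  have hratio : ∀ᶠ n in atTop, (fun n => ∑' k, F n k) n = coeff n G / coeff n C := by
    filter_upwards [eventually_ge_atTop n₀] with n hn
    have hts : ∑' k, F n k = ∑ k ∈ range (n + 1), F n k := by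
      refine tsum_eq_sum fun k hk => ?_
      have : ¬ k ≤ n := by
        intro h
        exact hk (Finset.mem_range.mpr (Nat.lt_succ_of_le h))
      simp only [hFdef, if_neg this]
    rw [hts, hG n, Finset.sum_div]
    refine Finset.sum_congr rfl fun k hk => ?_
    have hkn : k ≤ n := Nat.lt_succ_iff.mp (Finset.mem_range.mp hk)
    simp only [hFdef, if_pos hkn]
  have hGtend : Tendsto (fun n => coeff n G / coeff n C) atTop (nhds (Real.exp C₀)) :=
    hGlim.congr' hratio
  -- final assembly
  intro k hk
  have hnum : Tendsto (fun n => (coeff n (C ^ k) / (k.factorial : ℝ)) / coeff n C) atTop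
      (nhds ((k : ℝ) * C₀ ^ (k - 1) / (k.factorial : ℝ))) := by
    have h := (hasymp k hk).div_const (k.factorial : ℝ)
    refine h.congr fun n => ?_
    rw [div_right_comm]
  have hexp0 : Real.exp C₀ ≠ 0 := (Real.exp_pos C₀).ne'
  have hcomb := hnum.div hGtend hexp0
  have hvaleq : ((k : ℝ) * C₀ ^ (k - 1) / (k.factorial : ℝ)) / Real.exp C₀
      = C₀ ^ (k - 1) / (k - 1).factorial * Real.exp (-C₀) := by
    have hfacid : ((k.factorial : ℕ) : ℝ) = (k : ℝ) * ((k - 1).factorial : ℝ) := by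
      rw [← Nat.mul_factorial_pred (by omega : k ≠ 0)]
      push_cast
      ring
    have hkR : ((k:ℕ) : ℝ) ≠ 0 := by
      have : k ≠ 0 := by omega
      exact_mod_cast this
    have hf1 : (((k - 1).factorial : ℕ) : ℝ) ≠ 0 := by
      exact_mod_cast (k - 1).factorial_ne_zero
    rw [Real.exp_neg, hfacid]
    field_simp
  rw [← hvaleq]
  refine hcomb.congr' ?_
  filter_upwards [eventually_ge_atTop n₀] with n hn
  have hc := (hn₀pos n hn).ne'
  show (coeff n (C ^ k) / (k.factorial : ℝ)) / coeff n C / (coeff n G / coeff n C)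
      = coeff n (C ^ k) / (k.factorial : ℝ) / coeff n G
  rw [div_div_div_comm, div_self hc, div_one]
end
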